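/- Let Γ be a game in which each player k ∈ K has a compact convex strategy set S_k ⊂ ℝ^M and utility u_k, and suppose the weighted sum σ(X, r) = Σ_k r_k u_k(X) with all r_k > 0 is diagonally strictly concave, i.e. (X¹ - X⁰)ᵀ(∇σ(X¹, r) - ∇σ(X⁰, r)) < 0 for all distinct X⁰, X¹. Then Γ has at most one Nash equilibrium. -/

import Mathlib

open Set

/-- A Nash equilibrium of the game with strategy sets `S` and utilities `u`. -/
def IsNashEq {ι E : Type*} [DecidableEq ι] (S : ι → Set E) (u : ι → (ι → E) → ℝ)
    (X : ι → E) : Prop :=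
  (∀ k, X k ∈ S k) ∧
    ∀ k, ∀ x' ∈ S k, u k (Function.update X k x') ≤ u k X

/-- First-order condition at a constrained maximum. -/
lemma foc {M : ℕ} {f : EuclideanSpace ℝ (Fin M) → ℝ} {s : Set (EuclideanSpace ℝ (Fin M))}
    {a g x' : EuclideanSpace ℝ (Fin M)} (hconv : Convex ℝ s)
    (hg : HasGradientAt f g a) (ha : a ∈ s) (hx' : x' ∈ s)
    (hmax : ∀ x ∈ s, f x ≤ f a) :
    inner ℝ (x' - a) g ≤ (0:ℝ) := by
  have hmax' : IsLocalMaxOn f s a := (isMaxOn_iff.mpr hmax).localize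
  have hfd : HasFDerivWithinAt f ((InnerProductSpace.toDual ℝ _) g) s a :=
    (hg.hasFDerivAt).hasFDerivWithinAt
  have hy : x' - a ∈ posTangentConeAt s a :=
    sub_mem_posTangentConeAt_of_segment_subset (hconv.segment_subset ha hx')
  have := hmax'.hasFDerivWithinAt_nonpos hfd hy
  simpa [InnerProductSpace.toDual_apply_apply, real_inner_comm, mul_comm] using this

theorem rosen_uniqueness
    {ι : Type*} [Fintype ι] [DecidableEq ι] (M : ℕ)
    (S : ι → Set (EuclideanSpace ℝ (Fin M)))
    (hScomp : ∀ k, IsCompact (S k)) (hSconv : ∀ k, Convex ℝ (S k))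
    (u : ι → (ι → EuclideanSpace ℝ (Fin M)) → ℝ)
    (r : ι → ℝ) (hr : ∀ k, 0 < r k)
    (g : ι → (ι → EuclideanSpace ℝ (Fin M)) → EuclideanSpace ℝ (Fin M))
    (hgrad : ∀ k (X : ι → EuclideanSpace ℝ (Fin M)),
      HasGradientAt (fun x => u k (Function.update X k x)) (g k X) (X k))
    (hDSC : ∀ X0 X1 : ι → EuclideanSpace ℝ (Fin M),
      (∀ k, X0 k ∈ S k) → (∀ k, X1 k ∈ S k) → X0 ≠ X1 →
      ∑ k, r k * inner ℝ (X1 k - X0 k) (g k X1 - g k X0) < (0:ℝ)) :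
    ∀ X0 X1 : ι → EuclideanSpace ℝ (Fin M),
      IsNashEq S u X0 → IsNashEq S u X1 → X0 = X1 := by
  intro X0 X1 h0 h1
  by_contra hne
  obtain ⟨h0mem, h0max⟩ := h0
  obtain ⟨h1mem, h1max⟩ := h1
  have key : ∀ (X : ι → EuclideanSpace ℝ (Fin M)),
      (∀ k, X k ∈ S k) → (∀ k, ∀ x' ∈ S k, u k (Function.update X k x') ≤ u k X) →
      ∀ k, ∀ x' ∈ S k, inner ℝ (x' - X k) (g k X) ≤ (0:ℝ) := by
    intro X hXmem hXmax k x' hx'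
    refine foc (hSconv k) (hgrad k X) (hXmem k) hx' ?_
    intro x hx
    have := hXmax k x hx
    simpa [Function.update_eq_self] using this
  have hsum : (0:ℝ) ≤ ∑ k, r k * inner ℝ (X1 k - X0 k) (g k X1 - g k X0) := by
    apply Finset.sum_nonneg
    intro k _
    have h01 : inner ℝ (X1 k - X0 k) (g k X0) ≤ (0:ℝ) :=
      key X0 h0mem h0max k (X1 k) (h1mem k)
    have h10 : inner ℝ (X0 k - X1 k) (g k X1) ≤ (0:ℝ) :=
      key X1 h1mem h1max k (X0 k) (h0mem k)
    have : (0:ℝ) ≤ inner ℝ (X1 k - X0 k) (g k X1 - g k X0) := by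
      have e : (inner ℝ (X1 k - X0 k) (g k X1 - g k X0) : ℝ)
          = -(inner ℝ (X0 k - X1 k) (g k X1) : ℝ) - (inner ℝ (X1 k - X0 k) (g k X0) : ℝ) := by
        rw [inner_sub_right, ← neg_sub (X1 k) (X0 k), inner_neg_left]
        ring
      rw [e]
      linarith
    exact mul_nonneg (hr k).le this
  exact absurd (hDSC X0 X1 h0mem h1mem hne) (not_lt.2 hsum)
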